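/- Let k be a field, S = k[x_0,…,x_n], and let I ⊆ S be an ideal with minimal primary decomposition I = Q_1 ∩ … ∩ Q_k, with Q_i P_i-primary. Assume each multiplicity mult_I(P_i) is finite and set B = Σ_{i=1}^{k} mult_I(P_i). Then there exists a multi-exponent α ∈ ℕ^{n+1} with α_0 + … + α_n ≤ B such that (I : x_0^{α_0}⋯x_n^{α_n}) = (I : (x_0⋯x_n)^∞). In particular, if I contains a monomial, then I contains a monomial of degree not greater than B. -/

import Mathlib

/-- There is a chain of ideals `Q_i ∩ I_i = J_ℓ ⊊ J_{ℓ-1} ⊊ … ⊊ J_1 = P ∩ I_i` of length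
`ℓ` in which every `J_j` is of the form `R_j ∩ I_i` for some `P`-primary ideal `R_j`.
Here `J k` denotes `J_{k+1}`. -/
def IsMultChain {R : Type*} [CommRing R] (Qi Ii P : Ideal R) (ℓ : ℕ) : Prop :=
  ∃ J : Fin ℓ → Ideal R,
    (∀ a b : Fin ℓ, a < b → J b < J a) ∧
    (∀ k : Fin ℓ, ∃ Rk : Ideal R, Rk.IsPrimary ∧ Rk.radical = P ∧ J k = Rk ⊓ Ii) ∧
    ∃ h : 0 < ℓ, J ⟨0, h⟩ = P ⊓ Ii ∧ J ⟨ℓ - 1, Nat.sub_lt h Nat.one_pos⟩ = Qi ⊓ Ii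

/-- The multiplicity `mult_I(P)` of an associated prime `P` with primary component `Qi`
and `I_i = ⋂ {Q_j | P_j ⊊ P}`: the supremum in `ℕ ∪ {∞}` of the lengths of the chains
above. -/
noncomputable def multOf {R : Type*} [CommRing R] (Qi Ii P : Ideal R) : ℕ∞ :=
  sSup { m : ℕ∞ | ∃ ℓ : ℕ, m = (ℓ : ℕ∞) ∧ IsMultChain Qi Ii P ℓ }

open MvPolynomial

section ColonHelpers

variable {R : Type*} [CommRing R]

/-- The colon ideal `(I : a)` of an ideal by a single ring element. -/
def mcolon (I : Ideal R) (a : R) : Ideal R where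
  carrier := {g | g * a ∈ I}
  add_mem' := by
    intro x y hx hy
    simpa [add_mul] using Ideal.add_mem I hx hy
  zero_mem' := by simp
  smul_mem' := by
    intro c x hx
    simpa [smul_eq_mul, mul_assoc] using Ideal.mul_mem_left I c hx

lemma mem_mcolon {I : Ideal R} {a g : R} : g ∈ mcolon I a ↔ g * a ∈ I := Iff.rfl

lemma mcolon_one (I : Ideal R) : mcolon I 1 = I := by
  ext g; simp [mem_mcolon]

lemma self_le_mcolon (I : Ideal R) (a : R) : I ≤ mcolon I a :=
  fun g hg => I.mul_mem_right a hg

lemma primary_mem_of_mul {Q : Ideal R} (hQ : Q.IsPrimary) {u v : R}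
    (h : u * v ∈ Q) (hv : v ∉ Q.radical) : u ∈ Q :=
  ((Ideal.isPrimary_iff.mp hQ).2 h).resolve_right hv

lemma mcolon_le_radical {Q : Ideal R} (hQ : Q.IsPrimary) {a : R} (ha : a ∉ Q) :
    mcolon Q a ≤ Q.radical := by
  intro z hz
  rcases (Ideal.isPrimary_iff.mp hQ).2 (show a * z ∈ Q by rw [mul_comm]; exact hz) with h | h
  · exact absurd h ha
  · exact h

lemma radical_mcolon {Q : Ideal R} (hQ : Q.IsPrimary) {a : R} (ha : a ∉ Q) :
    (mcolon Q a).radical = Q.radical := by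
  refine le_antisymm ?_ (Ideal.radical_mono (self_le_mcolon Q a))
  have h := Ideal.radical_mono (mcolon_le_radical hQ ha)
  simpa [Ideal.radical_idem] using h

lemma mcolon_isPrimary {Q : Ideal R} (hQ : Q.IsPrimary) {a : R} (ha : a ∉ Q) :
    (mcolon Q a).IsPrimary := by
  rw [Ideal.isPrimary_iff]
  constructor
  · intro htop
    have h1 : (1 : R) ∈ mcolon Q a := htop ▸ Submodule.mem_top
    rw [mem_mcolon, one_mul] at h1
    exact ha h1
  · intro x y hxy
    by_cases hy : y ∈ Q.radical
    · right; rwa [radical_mcolon hQ ha]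
    · left
      rw [mem_mcolon] at hxy ⊢
      have h2 : (x * a) * y ∈ Q := by
        have : x * y * a = (x * a) * y := by ring
        rwa [this] at hxy
      exact primary_mem_of_mul hQ h2 hy

lemma strictanti_of_consec {ℓ : ℕ} (J : Fin ℓ → Ideal R)
    (h : ∀ k : ℕ, (hk : k + 1 < ℓ) → J ⟨k + 1, hk⟩ < J ⟨k, Nat.lt_of_succ_lt hk⟩) :
    ∀ a b : Fin ℓ, a < b → J b < J a := by
  have key : ∀ (bv : ℕ) (hb : bv < ℓ) (av : ℕ) (ha : av < ℓ), av < bv →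
      J ⟨bv, hb⟩ < J ⟨av, ha⟩ := by
    intro bv
    induction bv with
    | zero => intro hb av ha hab; omega
    | succ k IH =>
      intro hb av ha hab
      rcases Nat.lt_or_ge av k with hak | hak
      · exact lt_trans (h k hb) (IH (Nat.lt_of_succ_lt hb) av ha hak)
      · have hk : av = k := by omega
        subst hk
        exact h av hb
  intro a b hab
  exact key b.val b.isLt a.val a.isLt (by exact hab)

end ColonHelpers

section MpowHelpers

variable {F : Type*} [Field F] {n : ℕ}

/-- The monomial `∏ v, X v ^ γ v`. -/
noncomputable def mpow (γ : Fin (n + 1) → ℕ) : MvPolynomial (Fin (n + 1)) F :=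
  ∏ v, X v ^ γ v

lemma mpow_add (γ δ : Fin (n + 1) → ℕ) :
    (mpow (γ + δ) : MvPolynomial (Fin (n + 1)) F) = mpow γ * mpow δ := by
  simp [mpow, pow_add, Finset.prod_mul_distrib]

lemma mpow_zero : (mpow 0 : MvPolynomial (Fin (n + 1)) F) = 1 := by
  simp [mpow]

lemma mpow_single (v : Fin (n + 1)) :
    (mpow (Pi.single v 1) : MvPolynomial (Fin (n + 1)) F) = X v := by
  rw [mpow, Finset.prod_eq_single v]
  · simp
  · intro w _ hw
    rw [Pi.single_eq_of_ne hw, pow_zero]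
  · intro h
    exact absurd (Finset.mem_univ v) h

lemma mpow_const (m : ℕ) :
    (mpow (fun _ => m) : MvPolynomial (Fin (n + 1)) F) = (∏ v, X v) ^ m := by
  simp [mpow, Finset.prod_pow]

lemma exists_pow_of_mul_mpow {I : Ideal (MvPolynomial (Fin (n + 1)) F)}
    {α : Fin (n + 1) → ℕ} {g : MvPolynomial (Fin (n + 1)) F}
    (h : g * mpow α ∈ I) : ∃ m : ℕ, g * (∏ v, (X v : MvPolynomial (Fin (n + 1)) F)) ^ m ∈ I := by
  refine ⟨∑ v, α v, ?_⟩
  have hle : ∀ v, α v ≤ ∑ w, α w := fun v =>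
    Finset.single_le_sum (fun w _ => Nat.zero_le _) (Finset.mem_univ v)
  have hsplit : (fun _ => ∑ w, α w) = α + fun v => (∑ w, α w) - α v := by
    funext v
    simp only [Pi.add_apply]
    have := hle v
    omega
  have : (∏ v, (X v : MvPolynomial (Fin (n + 1)) F)) ^ (∑ v, α v) =
      mpow α * mpow (fun v => (∑ w, α w) - α v) := by
    rw [← mpow_const, hsplit, mpow_add]
  rw [this, ← mul_assoc]
  exact I.mul_mem_right _ h

/-- The saturation of `I` with respect to powers of `c`, as an ideal. -/
def satId {R : Type*} [CommRing R] (c : R) (I : Ideal R) : Ideal R where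
  carrier := {g | ∃ m : ℕ, g * c ^ m ∈ I}
  zero_mem' := ⟨0, by simp⟩
  add_mem' := by
    rintro x y ⟨mx, hx⟩ ⟨my, hy⟩
    refine ⟨mx + my, ?_⟩
    rw [add_mul]
    refine Ideal.add_mem I ?_ ?_
    · rw [pow_add, ← mul_assoc]
      exact I.mul_mem_right _ hx
    · have : y * c ^ (mx + my) = y * c ^ my * c ^ mx := by rw [pow_add]; ring
      rw [this]
      exact I.mul_mem_right _ hy
  smul_mem' := by
    rintro a x ⟨m, hx⟩
    refine ⟨m, ?_⟩
    have : a • x * c ^ m = a * (x * c ^ m) := by simp [smul_eq_mul, mul_assoc]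
    rw [this]
    exact I.mul_mem_left a hx

lemma mem_satId {R : Type*} [CommRing R] {c : R} {I : Ideal R} {g : R} :
    g ∈ satId c I ↔ ∃ m : ℕ, g * c ^ m ∈ I := Iff.rfl

end MpowHelpers

section ChainBound

lemma multOf_one_le {R : Type*} [CommRing R] {Qi Pp Im : Ideal R}
    (hQ : Qi.IsPrimary) (hP : Qi.radical = Pp) :
    (1 : ℕ∞) ≤ multOf Qi Im Pp := by
  have hPpprime : Pp.IsPrime := hP ▸ Ideal.isPrime_radical hQ
  by_cases h : Pp ⊓ Im = Qi ⊓ Im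
  · have hch : IsMultChain Qi Im Pp 1 := by
      refine ⟨fun _ => Pp ⊓ Im, ?_, ?_, ?_⟩
      · intro a b hab
        rw [Fin.lt_def] at hab
        omega
      · intro _
        exact ⟨Pp, hPpprime.isPrimary, hPpprime.radical, rfl⟩
      · exact ⟨Nat.one_pos, rfl, by rw [h]⟩
    exact le_sSup ⟨1, rfl, hch⟩
  · have hch : IsMultChain Qi Im Pp 2 := by
      refine ⟨fun k => if k.val = 0 then Pp ⊓ Im else Qi ⊓ Im, ?_, ?_, ?_⟩
      · intro a b hab
        rw [Fin.lt_def] at hab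
        have ha : a.val = 0 := by omega
        have hb : b.val = 1 := by omega
        simp only [ha, hb, if_pos rfl, if_neg one_ne_zero]
        refine lt_of_le_of_ne (inf_le_inf_right Im (hP ▸ Ideal.le_radical)) ?_
        exact fun e => h e.symm
      · intro k
        by_cases hk : k.val = 0
        · exact ⟨Pp, hPpprime.isPrimary, hPpprime.radical, by simp [hk]⟩
        · exact ⟨Qi, hQ, hP, by simp [hk]⟩
      · refine ⟨by omega, by simp, by simp⟩
    have h2 : (2 : ℕ∞) ≤ multOf Qi Im Pp := le_sSup ⟨2, rfl, hch⟩
    exact le_trans (by norm_num) h2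

variable {F : Type*} [Field F] {n : ℕ}

private noncomputable def pkf {n : ℕ} (γ : Fin (n + 1) → ℕ) : Fin (n + 1) :=
  if h : ∃ v, γ v ≠ 0 then h.choose else 0

private noncomputable def nxf {n : ℕ} (γ : Fin (n + 1) → ℕ) : Fin (n + 1) → ℕ :=
  Function.update γ (pkf γ) (γ (pkf γ) - 1)

private lemma nxf_step {n : ℕ} (γ : Fin (n + 1) → ℕ) (hγ : (∑ v, γ v) ≠ 0) :
    ∃ v, 1 ≤ γ v ∧ nxf γ + Pi.single v 1 = γ := by
  have hex : ∃ v, γ v ≠ 0 := by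
    by_contra hno
    push_neg at hno
    exact hγ (Finset.sum_eq_zero fun v _ => hno v)
  have hpk : pkf γ = hex.choose := dif_pos hex
  refine ⟨hex.choose, Nat.one_le_iff_ne_zero.mpr hex.choose_spec, ?_⟩
  funext w
  by_cases hw : w = hex.choose
  · subst hw
    simp only [Pi.add_apply, nxf, hpk, Function.update_self, Pi.single_eq_same]
    have := Nat.one_le_iff_ne_zero.mpr hex.choose_spec
    omega
  · simp only [Pi.add_apply, nxf, hpk, Function.update_of_ne hw,
      Pi.single_eq_of_ne hw, add_zero]

private lemma sum_single_one {n : ℕ} (v : Fin (n + 1)) :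
    (∑ w, Pi.single v 1 w) = 1 := by
  simp [Pi.single_apply]

lemma chain_bound {Qi Pp Im W : Ideal (MvPolynomial (Fin (n + 1)) F)}
    (hQ : Qi.IsPrimary) (hP : Qi.radical = Pp) (hWIm : W ≤ Im)
    (d : ℕ) (g₀ : Fin (n + 1) → ℕ) (hg₀ : (∑ v, g₀ v) = d)
    (hWg : ∀ g ∈ W, g * mpow g₀ ∈ Qi)
    (hminl : ∀ γ : Fin (n + 1) → ℕ, (∑ v, γ v) < d →
      ∃ u ∈ W, u * (mpow γ : MvPolynomial (Fin (n + 1)) F) ∉ Qi) :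
    (d : ℕ∞) ≤ multOf Qi Im Pp := by
  classical
  have hPpprime : Pp.IsPrime := hP ▸ Ideal.isPrime_radical hQ
  rcases Nat.lt_or_ge d 2 with hd2 | hd2
  · have h1 : (d : ℕ∞) ≤ 1 := by exact_mod_cast Nat.lt_succ_iff.mp hd2
    exact le_trans h1 (multOf_one_le hQ hP)
  · set ds : ℕ → (Fin (n + 1) → ℕ) := fun t => nxf^[t] g₀ with hdsdef
    have hds0 : ds 0 = g₀ := rfl
    have hdss : ∀ t, ds (t + 1) = nxf (ds t) := fun t => Function.iterate_succ_apply' nxf t g₀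
    have hsum : ∀ t, t ≤ d → (∑ v, ds t v) = d - t := by
      intro t
      induction t with
      | zero => intro _; simpa [hds0] using hg₀
      | succ k IH =>
        intro hk
        have h1 := IH (Nat.le_of_succ_le hk)
        have hne : (∑ v, ds k v) ≠ 0 := by rw [h1]; omega
        obtain ⟨v, hv1, hveq⟩ := nxf_step (ds k) hne
        have h2 : (∑ w, ds k w) = (∑ w, ds (k + 1) w) + 1 := by
          conv_lhs => rw [← hveq]
          simp only [Pi.add_apply]
          rw [Finset.sum_add_distrib, sum_single_one, hdss k]
        omega
    have hstepd : ∀ t, t < d → ∃ v, 1 ≤ ds t v ∧ ds (t + 1) + Pi.single v 1 = ds t := by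
      intro t ht
      have hne : (∑ v, ds t v) ≠ 0 := by rw [hsum t (le_of_lt ht)]; omega
      obtain ⟨v, hv1, hveq⟩ := nxf_step (ds t) hne
      exact ⟨v, hv1, by rw [hdss]; exact hveq⟩
    have hle : ∀ t, t ≤ d → ∀ w, ds t w ≤ g₀ w := by
      intro t
      induction t with
      | zero => intro _ w; rw [hds0]
      | succ k IH =>
        intro hk w
        obtain ⟨v, _, hveq⟩ := hstepd k (by omega)
        have hstep1 : ds (k + 1) w ≤ ds k w := by
          conv_rhs => rw [← hveq]
          simp only [Pi.add_apply]
          exact Nat.le_add_right _ _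
        exact le_trans hstep1 (IH (by omega) w)
    have hA : ∀ t, t ≤ d → (fun w => g₀ w - ds t w) + ds t = g₀ := by
      intro t ht; funext w
      have := hle t ht w
      simp only [Pi.add_apply]
      omega
    have hAsum : ∀ t, t ≤ d → (∑ w, (g₀ w - ds t w)) = t := by
      intro t ht
      have h1 : (∑ w, ((fun w => g₀ w - ds t w) + ds t) w) = (∑ w, g₀ w) := by
        rw [hA t ht]
      simp only [Pi.add_apply] at h1
      rw [Finset.sum_add_distrib] at h1
      have h2 := hsum t ht
      omega
    have hnotQ : ∀ t, 1 ≤ t → t ≤ d → (mpow (ds t) : MvPolynomial (Fin (n + 1)) F) ∉ Qi := by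
      intro t h1 h2 hmem
      obtain ⟨u, huW, hu⟩ := hminl (ds t) (by rw [hsum t h2]; omega)
      exact hu (Qi.mul_mem_left u hmem)
    have hvarP : ∀ w, 1 ≤ g₀ w → (X w : MvPolynomial (Fin (n + 1)) F) ∈ Pp := by
      intro w hw
      by_contra hX
      have hsplit : (fun w' => g₀ w' - (Pi.single w 1 : Fin (n + 1) → ℕ) w') + Pi.single w 1 = g₀ := by
        funext w'
        by_cases hww : w' = w
        · subst hww
          simp only [Pi.add_apply, Pi.single_eq_same]
          omega
        · simp [Pi.add_apply, Pi.single_eq_of_ne hww]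
      have hsum' : (∑ w', (g₀ w' - (Pi.single w 1 : Fin (n + 1) → ℕ) w')) < d := by
        have hh : (∑ w', (((fun w' => g₀ w' - (Pi.single w 1 : Fin (n + 1) → ℕ) w') + Pi.single w 1 : Fin (n + 1) → ℕ)) w') = d := by
          rw [hsplit, hg₀]
        simp only [Pi.add_apply] at hh
        rw [Finset.sum_add_distrib, sum_single_one] at hh
        omega
      obtain ⟨u, huW, hu⟩ := hminl _ hsum'
      apply hu
      have hmm : (u * mpow (fun w' => g₀ w' - (Pi.single w 1 : Fin (n + 1) → ℕ) w')) * X w ∈ Qi := by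
        rw [mul_assoc, ← mpow_single w, ← mpow_add, hsplit]
        exact hWg u huW
      exact primary_mem_of_mul hQ hmm (by rw [hP]; exact hX)
    have hwitness : ∀ t, 1 ≤ t → t + 1 ≤ d →
        ∃ h, h ∈ mcolon Qi (mpow (ds t)) ⊓ Im ∧ h ∉ mcolon Qi (mpow (ds (t + 1))) := by
      intro t ht1 ht2
      have hsξ : (∑ w, ((fun w => g₀ w - ds t w) + ds (t + 1)) w) < d := by
        simp only [Pi.add_apply]
        rw [Finset.sum_add_distrib, hAsum t (by omega), hsum (t + 1) ht2]
        omega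
      obtain ⟨u, huW, hu⟩ := hminl _ hsξ
      refine ⟨u * mpow (fun w => g₀ w - ds t w), Submodule.mem_inf.mpr ⟨?_, ?_⟩, ?_⟩
      · rw [mem_mcolon, mul_assoc, ← mpow_add, hA t (by omega)]
        exact hWg u huW
      · exact Im.mul_mem_right _ (hWIm huW)
      · rw [mem_mcolon, mul_assoc, ← mpow_add]
        exact hu
    have hwit0 : ∃ h, h ∈ Pp ⊓ Im ∧ h ∉ mcolon Qi (mpow (ds 2)) := by
      obtain ⟨v, hv1, hveq⟩ := hstepd 0 (by omega)
      have hsξ : (∑ w, ((Pi.single v 1 : Fin (n + 1) → ℕ) + ds 2) w) < d := by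
        simp only [Pi.add_apply]
        rw [Finset.sum_add_distrib, sum_single_one, hsum 2 hd2]
        omega
      obtain ⟨u, huW, hu⟩ := hminl _ hsξ
      rw [hds0] at hv1
      refine ⟨u * X v, Submodule.mem_inf.mpr ⟨?_, ?_⟩, ?_⟩
      · exact Ideal.mul_mem_left Pp u (hvarP v hv1)
      · exact Im.mul_mem_right _ (hWIm huW)
      · rw [mem_mcolon, mul_assoc, ← mpow_single v, ← mpow_add]
        exact hu
    have hcolmono : ∀ t, t < d →
        mcolon Qi (mpow (ds (t + 1))) ≤ mcolon Qi (mpow (ds t)) := by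
      intro t ht z hz
      obtain ⟨v, hv1, hveq⟩ := hstepd t ht
      rw [mem_mcolon] at hz ⊢
      rw [← hveq, mpow_add, ← mul_assoc]
      exact Qi.mul_mem_right _ hz
    have hchain : IsMultChain Qi Im Pp d := by
      refine ⟨fun k => if k.val = 0 then Pp ⊓ Im
        else mcolon Qi (mpow (ds (k.val + 1))) ⊓ Im, ?_, ?_, ?_⟩
      · apply strictanti_of_consec
        intro k hk
        show (if k + 1 = 0 then Pp ⊓ Im else mcolon Qi (mpow (ds (k + 1 + 1))) ⊓ Im) <
          (if k = 0 then Pp ⊓ Im else mcolon Qi (mpow (ds (k + 1))) ⊓ Im)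
        rw [if_neg (Nat.succ_ne_zero k)]
        by_cases hk0 : k = 0
        · subst hk0
          rw [if_pos rfl]
          refine lt_of_le_of_ne
            (inf_le_inf_right Im (hP ▸ mcolon_le_radical hQ (hnotQ 2 (by omega) hd2))) ?_
          intro he
          obtain ⟨h, hmem, hnot⟩ := hwit0
          rw [← he] at hmem
          exact hnot (Submodule.mem_inf.mp hmem).1
        · rw [if_neg hk0]
          obtain ⟨h, hmem, hnot⟩ := hwitness (k + 1) (by omega) (by omega)
          refine lt_of_le_of_ne (inf_le_inf_right Im (hcolmono (k + 1) (by omega))) ?_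
          intro he
          rw [← he] at hmem
          exact hnot (Submodule.mem_inf.mp hmem).1
      · intro k
        by_cases hk0 : k.val = 0
        · exact ⟨Pp, hPpprime.isPrimary, hPpprime.radical, by simp [hk0]⟩
        · have hklt := k.isLt
          refine ⟨mcolon Qi (mpow (ds (k.val + 1))),
            mcolon_isPrimary hQ (hnotQ (k.val + 1) (by omega) (by omega)), ?_, by simp [hk0]⟩
          rw [radical_mcolon hQ (hnotQ (k.val + 1) (by omega) (by omega))]
          exact hP
      · refine ⟨by omega, by simp, ?_⟩
        have hne0 : ¬ (d - 1 = 0) := by omega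
        show (if d - 1 = 0 then Pp ⊓ Im else mcolon Qi (mpow (ds (d - 1 + 1))) ⊓ Im) = Qi ⊓ Im
        rw [if_neg hne0]
        have hdd : d - 1 + 1 = d := by omega
        rw [hdd]
        have hzero : ∀ w, ds d w = 0 := by
          intro w
          have h0 := hsum d le_rfl
          have h0' : (∑ w, ds d w) = 0 := by omega
          exact (Finset.sum_eq_zero_iff.mp h0') w (Finset.mem_univ w)
        have h1 : (mpow (ds d) : MvPolynomial (Fin (n + 1)) F) = 1 := by
          simp only [mpow]
          apply Finset.prod_eq_one
          intro v _
          rw [hzero v, pow_zero]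
        rw [h1, mcolon_one]
    exact le_sSup ⟨d, rfl, hchain⟩

end ChainBound

section Aux

open MvPolynomial

lemma aux_colon {F : Type*} [Field F] {n r : ℕ}
    (Q P : Fin r → Ideal (MvPolynomial (Fin (n + 1)) F))
    (hQ : ∀ i, (Q i).IsPrimary) (hP : ∀ i, (Q i).radical = P i)
    (b : Fin r → ℕ)
    (hmult : ∀ i, multOf (Q i) (⨅ j ∈ { j : Fin r | P j < P i }, Q j) (P i) = (b i : ℕ∞)) :
    ∀ s : Finset (Fin r), (∀ i ∈ s, ∀ j, P j < P i → j ∈ s) →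
      ∃ α : Fin (n + 1) → ℕ, (∑ v, α v) ≤ ∑ i ∈ s, b i ∧
        ∀ g, (∃ m : ℕ, g * (∏ v, (X v : MvPolynomial (Fin (n + 1)) F)) ^ m ∈
            (⨅ i ∈ s, Q i : Ideal _)) →
          g * mpow α ∈ (⨅ i ∈ s, Q i : Ideal _) := by
  classical
  intro s
  induction s using Finset.strongInduction with
  | _ s IH =>
    intro hdc
    rcases s.eq_empty_or_nonempty with rfl | hne
    · refine ⟨0, by simp, ?_⟩
      intro g _
      simp [Submodule.mem_iInf]
    · obtain ⟨Jm, hJm, hmax⟩ := (s.image P).exists_maximal (hne.image P)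
      obtain ⟨i₀, hi₀s, hi₀⟩ := Finset.mem_image.mp hJm
      have hmaxP : ∀ j ∈ s, ¬ P i₀ < P j := by
        intro j hj hlt
        exact (hi₀ ▸ hlt : Jm < P j).not_ge (hmax (Finset.mem_image_of_mem P hj) (hi₀ ▸ hlt : Jm < P j).le)
      set s' := s.erase i₀ with hs'
      have hsub : s' ⊂ s := Finset.erase_ssubset hi₀s
      have hdc' : ∀ i ∈ s', ∀ j, P j < P i → j ∈ s' := by
        intro i hi j hji
        have his : i ∈ s := Finset.mem_of_mem_erase hi
        have hjs : j ∈ s := hdc i his j hji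
        refine Finset.mem_erase.mpr ⟨?_, hjs⟩
        rintro rfl
        exact hmaxP i his hji
      obtain ⟨α', hα'b, hα'⟩ := IH s' hsub hdc'
      have hIeq : (⨅ i ∈ s, Q i : Ideal _) = Q i₀ ⊓ (⨅ i ∈ s', Q i : Ideal _) := by
        conv_lhs => rw [← Finset.insert_erase hi₀s]
        rw [Finset.iInf_insert]
      have hIle : (⨅ i ∈ s, Q i : Ideal _) ≤ (⨅ i ∈ s', Q i : Ideal _) := by
        rw [hIeq]; exact inf_le_right
      have hIleQ : ∀ j ∈ s, (⨅ i ∈ s, Q i : Ideal _) ≤ Q j := fun j hj => iInf₂_le j hj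
      have hsumb : (∑ i ∈ s, b i) = b i₀ + ∑ i ∈ s', b i := (Finset.add_sum_erase s b hi₀s).symm
      have hPprime : (P i₀).IsPrime := hP i₀ ▸ Ideal.isPrime_radical (hQ i₀)
      by_cases hc : (∏ v, (X v : MvPolynomial (Fin (n + 1)) F)) ∈ P i₀
      · -- saturating component
        set c : MvPolynomial (Fin (n + 1)) F := ∏ v, X v with hc_def
        set Ism := (⨅ i ∈ s, Q i : Ideal (MvPolynomial (Fin (n + 1)) F)) with hIsm
        set I' := (⨅ i ∈ s', Q i : Ideal (MvPolynomial (Fin (n + 1)) F)) with hI'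
        set Wt := satId c Ism ⊓ I' with hWt
        have hWIm : Wt ≤ ⨅ j ∈ { j : Fin r | P j < P i₀ }, Q j := by
          refine le_iInf fun j => le_iInf fun hj => ?_
          have hjs : j ∈ s := hdc i₀ hi₀s j hj
          have hjne : j ≠ i₀ := by
            intro he
            have : P i₀ < P i₀ := he ▸ hj
            exact lt_irrefl _ this
          exact le_trans inf_le_right (iInf₂_le j (Finset.mem_erase.mpr ⟨hjne, hjs⟩))
        obtain ⟨T, hT⟩ := IsNoetherian.noetherian Wt
        have hTm : ∀ t ∈ T, ∃ m : ℕ, t * c ^ m ∈ Q i₀ := by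
          intro t ht
          have htW : t ∈ Wt := by rw [← hT]; exact Submodule.subset_span ht
          obtain ⟨m, hm⟩ := htW.1
          exact ⟨m, hIleQ i₀ hi₀s hm⟩
        choose mf hmf using hTm
        set M := T.attach.sup (fun t => mf t.1 t.2) with hMdef
        have hMW : ∀ g ∈ Wt, g * c ^ M ∈ Q i₀ := by
          have hspan : Wt ≤ mcolon (Q i₀) (c ^ M) := by
            rw [← hT, Submodule.span_le]
            intro t ht
            rw [SetLike.mem_coe, mem_mcolon]
            have hle : mf t ht ≤ M :=
              Finset.le_sup (f := fun t => mf t.1 t.2) (Finset.mem_attach T ⟨t, ht⟩)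
            have heq : t * c ^ M = t * c ^ mf t ht * c ^ (M - mf t ht) := by
              rw [mul_assoc, ← pow_add]
              congr 2
              omega
            rw [heq]
            exact (Q i₀).mul_mem_right _ (hmf t ht)
          intro g hg
          exact hspan hg
        have hex : ∃ d : ℕ, ∃ γ : Fin (n + 1) → ℕ, (∑ v, γ v) = d ∧
            ∀ g ∈ Wt, g * mpow γ ∈ Q i₀ := by
          refine ⟨(n + 1) * M, fun _ => M, ?_, ?_⟩
          · simp [Finset.sum_const, Finset.card_univ, mul_comm]
          · intro g hg
            rw [mpow_const]
            exact hMW g hg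
        obtain ⟨γ, hγs, hγ⟩ := Nat.find_spec hex
        have hminl : ∀ ξ : Fin (n + 1) → ℕ, (∑ v, ξ v) < Nat.find hex →
            ∃ u ∈ Wt, u * (mpow ξ : MvPolynomial (Fin (n + 1)) F) ∉ Q i₀ := by
          intro ξ hξ
          have hnot := Nat.find_min hex hξ
          by_contra hcon
          push_neg at hcon
          exact hnot ⟨ξ, rfl, hcon⟩
        have hδb : ((Nat.find hex : ℕ) : ℕ∞) ≤ (b i₀ : ℕ∞) := by
          rw [← hmult i₀]
          exact chain_bound (hQ i₀) (hP i₀) hWIm (Nat.find hex) γ hγs hγ hminl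
        have hδb' : Nat.find hex ≤ b i₀ := by exact_mod_cast hδb
        refine ⟨α' + γ, ?_, ?_⟩
        · have hsa : (∑ v, (α' + γ) v) = (∑ v, α' v) + ∑ v, γ v := by
            simp only [Pi.add_apply]
            exact Finset.sum_add_distrib
          rw [hsa, hsumb, hγs]
          omega
        · rintro g ⟨m, hm⟩
          have hg1 : g * mpow α' ∈ I' := hα' g ⟨m, hIle hm⟩
          have hgW : g * mpow α' ∈ Wt := by
            refine Submodule.mem_inf.mpr ⟨⟨m, ?_⟩, hg1⟩
            have heq : g * mpow α' * c ^ m = g * c ^ m * mpow α' := by ring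
            rw [heq]
            exact Ism.mul_mem_right _ hm
          have hq : g * mpow α' * mpow γ ∈ Q i₀ := hγ _ hgW
          rw [hIeq, mpow_add, ← mul_assoc]
          exact Submodule.mem_inf.mpr ⟨hq, I'.mul_mem_right _ hg1⟩
      · -- non-saturating component
        refine ⟨α', le_trans hα'b (by rw [hsumb]; omega), ?_⟩
        rintro g ⟨m, hm⟩
        have hg1 : g * mpow α' ∈ (⨅ i ∈ s', Q i : Ideal _) := hα' g ⟨m, hIle hm⟩
        have hgQ : g ∈ Q i₀ := by
          refine primary_mem_of_mul (hQ i₀) (hIleQ i₀ hi₀s hm) ?_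
          rw [hP i₀]
          intro hpow
          exact hc (hPprime.mem_of_pow_mem m hpow)
        rw [hIeq]
        exact Submodule.mem_inf.mpr ⟨(Q i₀).mul_mem_right _ hgQ, hg1⟩

end Aux

open MvPolynomial in
/-- Let `I = Q_1 ∩ … ∩ Q_r` be a minimal primary decomposition of an
ideal of `S = F[x_0,…,x_n]` with all multiplicities finite, `mult_I(P_i) = b_i`, and
`B = Σ b_i`.  Then there is a multi-exponent `α` of total degree at most `B` with
`(I : x^α) = (I : (x_0⋯x_n)^∞)`; in particular, if `I` contains a monomial then it
contains one of degree at most `B`. -/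
theorem exists_small_exponent_colon_eq_saturation
    {F : Type*} [Field F] {n : ℕ} {r : ℕ}
    (Q : Fin r → Ideal (MvPolynomial (Fin (n + 1)) F))
    (P : Fin r → Ideal (MvPolynomial (Fin (n + 1)) F))
    (hQ : ∀ i, (Q i).IsPrimary) (hP : ∀ i, (Q i).radical = P i)
    (hdist : ∀ i j, i ≠ j → P i ≠ P j)
    (hmin : ∀ i, ¬ ((⨅ j ∈ { j : Fin r | j ≠ i }, Q j :
        Ideal (MvPolynomial (Fin (n + 1)) F)) ≤ Q i))
    (b : Fin r → ℕ)
    (hmult : ∀ i, multOf (Q i) (⨅ j ∈ { j : Fin r | P j < P i }, Q j) (P i) = (b i : ℕ∞)) :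
    (∃ α : Fin (n + 1) → ℕ, (∑ i, α i) ≤ ∑ i, b i ∧
      { g : MvPolynomial (Fin (n + 1)) F |
          g * ∏ i, (X i : MvPolynomial (Fin (n + 1)) F) ^ α i ∈ (⨅ i, Q i : Ideal _) } =
      { g : MvPolynomial (Fin (n + 1)) F |
          ∃ m : ℕ, g * (∏ i, (X i : MvPolynomial (Fin (n + 1)) F)) ^ m ∈
            (⨅ i, Q i : Ideal _) }) ∧
    ((∃ β : Fin (n + 1) → ℕ,
        (∏ i, (X i : MvPolynomial (Fin (n + 1)) F) ^ β i) ∈ (⨅ i, Q i : Ideal _)) →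
      ∃ β : Fin (n + 1) → ℕ, (∑ i, β i) ≤ ∑ i, b i ∧
        (∏ i, (X i : MvPolynomial (Fin (n + 1)) F) ^ β i) ∈ (⨅ i, Q i : Ideal _)) := by
  obtain ⟨α, hb, himp⟩ :=
    aux_colon Q P hQ hP b hmult Finset.univ (fun i _ j _ => Finset.mem_univ j)
  have huniv : (⨅ i ∈ Finset.univ, Q i : Ideal (MvPolynomial (Fin (n + 1)) F)) = ⨅ i, Q i := by
    refine le_antisymm (le_iInf fun i => iInf₂_le i (Finset.mem_univ i))
      (le_iInf fun i => le_iInf fun _ => iInf_le _ i)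
  rw [huniv] at himp
  have hsets : { g : MvPolynomial (Fin (n + 1)) F |
          g * ∏ i, (X i : MvPolynomial (Fin (n + 1)) F) ^ α i ∈ (⨅ i, Q i : Ideal _) } =
      { g : MvPolynomial (Fin (n + 1)) F |
          ∃ m : ℕ, g * (∏ i, (X i : MvPolynomial (Fin (n + 1)) F)) ^ m ∈
            (⨅ i, Q i : Ideal _) } := by
    ext g
    simp only [Set.mem_setOf_eq]
    constructor
    · intro h
      exact exists_pow_of_mul_mpow (I := ⨅ i, Q i) (α := α) h
    · intro h
      exact himp g h
  refine ⟨⟨α, hb, hsets⟩, ?_⟩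
  rintro ⟨β, hβ⟩
  have h0 : (1 : MvPolynomial (Fin (n + 1)) F) * mpow β ∈ (⨅ i, Q i : Ideal _) := by
    rwa [one_mul]
  have h1 := exists_pow_of_mul_mpow h0
  have h2 := himp 1 h1
  rw [one_mul] at h2
  exact ⟨α, hb, h2⟩
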